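/- arXiv:2209.04925 — 2 statements merged into one kernel-verified Lean document; each statement's English description precedes it below -/
import Mathlib

section
/- Let G be a locally connected abelian topological group with G_e its identity component and T the closure of its torsion subgroup. Then the closure of the torsion subgroup of G_e equals G_e ∩ T. -/
theorem torsionClosure_of_identityComponent {G : Type*} [CommGroup G]
    [TopologicalSpace G] [IsTopologicalGroup G] [LocallyConnectedSpace G] :
    Subtype.val '' closure {x : connectedComponent (1 : G) | IsOfFinOrder (x : G)} =
      connectedComponent (1 : G) ∩
        ((CommGroup.torsion G).topologicalClosure : Set G) := by
  have hC : IsOpen (connectedComponent (1 : G)) := isOpen_connectedComponent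
  have himg : Subtype.val '' {x : connectedComponent (1 : G) | IsOfFinOrder (x : G)} =
      connectedComponent (1 : G) ∩ (CommGroup.torsion G : Set G) := by
    ext z
    simp only [Set.mem_image, Set.mem_setOf_eq, Set.mem_inter_iff, SetLike.mem_coe,
      CommGroup.mem_torsion]
    constructor
    · rintro ⟨y, hy, rfl⟩; exact ⟨y.2, hy⟩
    · rintro ⟨hz, hfin⟩; exact ⟨⟨z, hz⟩, hfin, rfl⟩
  ext x
  simp only [Set.mem_image, Set.mem_inter_iff, SetLike.mem_coe,
    Subgroup.topologicalClosure_coe, Set.mem_setOf_eq]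
  constructor
  · rintro ⟨y, hy, rfl⟩
    rw [closure_subtype, himg] at hy
    exact ⟨y.2, closure_mono Set.inter_subset_right hy⟩
  · rintro ⟨hx, hT⟩
    refine ⟨⟨x, hx⟩, ?_, rfl⟩
    rw [closure_subtype, himg]
    exact hC.inter_closure ⟨hx, hT⟩
end

section
/- Let G be a locally connected abelian topological group, T the closure of its torsion subgroup, and G_e its identity component. If G/(G_e + T) is torsion-free, then the image of T in π₀G = G/G_e equals the torsion subgroup of π₀G. -/
theorem image_of_torsionClosure_in_pi0 {G : Type*} [CommGroup G]
    [TopologicalSpace G] [IsTopologicalGroup G] [LocallyConnectedSpace G]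
    (Ge T : Subgroup G) (hGe : Ge = Subgroup.connectedComponentOfOne G)
    (hT : T = (CommGroup.torsion G).topologicalClosure)
    (htf : ∀ x : G ⧸ (Ge ⊔ T), IsOfFinOrder x → x = 1) :
    Subgroup.map (QuotientGroup.mk' Ge) T = CommGroup.torsion (G ⧸ Ge) := by
  have hGeOpen : IsOpen (Ge : Set G) := by
    rw [hGe]
    exact isOpen_connectedComponent
  have hle : T ≤ Ge ⊔ CommGroup.torsion G := by
    rw [hT]
    refine Subgroup.topologicalClosure_minimal _ le_sup_right ?_
    exact (Ge ⊔ CommGroup.torsion G).isClosed_of_isOpen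
      (Subgroup.isOpen_mono le_sup_left hGeOpen)
  apply le_antisymm
  · rintro x ⟨t, ht, rfl⟩
    have := hle ht
    rw [Subgroup.mem_sup] at this
    obtain ⟨g, hg, s, hs, rfl⟩ := this
    have hg1 : (QuotientGroup.mk' Ge) g = 1 := (QuotientGroup.eq_one_iff g).2 hg
    have h1 : (QuotientGroup.mk' Ge) (g * s) = (QuotientGroup.mk' Ge) s := by
      rw [map_mul, hg1, one_mul]
    rw [h1]
    exact (QuotientGroup.mk' Ge).isOfFinOrder hs
  · intro x hx
    obtain ⟨g, rfl⟩ := QuotientGroup.mk'_surjective Ge x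
    have h2 : IsOfFinOrder ((QuotientGroup.mk' (Ge ⊔ T)) g) := by
      have he : (QuotientGroup.mk' (Ge ⊔ T)) g =
          (QuotientGroup.map Ge (Ge ⊔ T) (MonoidHom.id G) le_sup_left)
            ((QuotientGroup.mk' Ge) g) := rfl
      rw [he]
      exact (QuotientGroup.map Ge (Ge ⊔ T) (MonoidHom.id G) le_sup_left).isOfFinOrder hx
    have h3 := htf _ h2
    rw [QuotientGroup.mk'_apply, QuotientGroup.eq_one_iff] at h3
    rw [Subgroup.mem_sup] at h3
    obtain ⟨y, hy, z, hz, rfl⟩ := h3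
    have hy1 : (QuotientGroup.mk' Ge) y = 1 := (QuotientGroup.eq_one_iff y).2 hy
    exact ⟨z, hz, by rw [map_mul, hy1, one_mul]⟩
end
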